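/- arXiv:1207.5103 — 5 statements merged into one kernel-verified Lean document; each statement's English description precedes it below -/
import Mathlib

section
/- For any N×4 table of numbers ±1 with columns A, A', B, B', the averages of products over rows satisfy the CHSH inequality ⟨AB⟩ + ⟨AB'⟩ + ⟨A'B⟩ − ⟨A'B'⟩ ≤ 2. -/
/-- Fact 2: the CHSH inequality for averages over the rows of an `N × 4`
table of numbers `±1` with columns `A, A', B, B'`. -/
theorem chsh_average (N : ℕ) (hN : 0 < N) (A A' B B' : Fin N → ℝ)
    (hA : ∀ j, A j = 1 ∨ A j = -1) (hA' : ∀ j, A' j = 1 ∨ A' j = -1)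
    (hB : ∀ j, B j = 1 ∨ B j = -1) (hB' : ∀ j, B' j = 1 ∨ B' j = -1) :
    (1 / N) * ∑ j, A j * B j + (1 / N) * ∑ j, A j * B' j
      + (1 / N) * ∑ j, A' j * B j - (1 / N) * ∑ j, A' j * B' j ≤ 2 := by
  have hNpos : (0:ℝ) < N := by exact_mod_cast hN
  have key : ∑ j, (A j * B j + A j * B' j + A' j * B j - A' j * B' j) ≤ 2 * N := by
    calc ∑ j, (A j * B j + A j * B' j + A' j * B j - A' j * B' j)
        ≤ ∑ _j : Fin N, (2:ℝ) := by
          apply Finset.sum_le_sum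
          intro j _
          rcases hA j with h1 | h1 <;> rcases hA' j with h2 | h2 <;>
            rcases hB j with h3 | h3 <;> rcases hB' j with h4 | h4 <;>
            simp [h1, h2, h3, h4] <;> norm_num
      _ = 2 * N := by simp [mul_comm]
  have : (1 / N) * ∑ j, (A j * B j + A j * B' j + A' j * B j - A' j * B' j) ≤ 2 := by
    rw [div_mul_eq_mul_div, one_mul, div_le_iff₀ hNpos]
    linarith [key]
  calc (1 / N) * ∑ j, A j * B j + (1 / N) * ∑ j, A j * B' j
      + (1 / N) * ∑ j, A' j * B j - (1 / N) * ∑ j, A' j * B' j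
      = (1 / N) * ∑ j, (A j * B j + A j * B' j + A' j * B j - A' j * B' j) := by
        simp [Finset.sum_add_distrib, Finset.sum_sub_distrib, mul_add, mul_sub]
    _ ≤ 2 := this
end

section
/- (Theorem 1, finite-sample CHSH inequality.) Suppose for each row of the table, independently across rows, one of A, A' is selected uniformly at random and one of B, B' is selected uniformly at random (four equally likely setting pairs per row, chosen independently of everything else). Then for any η ≥ 0, the probability that ⟨AB⟩_obs + ⟨AB'⟩_obs + ⟨A'B⟩_obs − ⟨A'B'⟩_obs ≤ 2 + η is at least 1 − 8·exp(−N·(η/16)²). -/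
open MeasureTheory

/-- The set of rows (out of `N`) in which the pair of coins takes the value `c`.
For each row `j`, `ω j` records the two coin tosses for that row:
`(ω j).1 = true` means `A` (rather than `A'`) is observed, and
`(ω j).2 = true` means `B` (rather than `B'`) is observed. -/
noncomputable def obsRows (N : ℕ) (ω : Fin N → Bool × Bool) (c : Bool × Bool) :
    Finset (Fin N) :=
  Finset.univ.filter (fun j => ω j = c)

/-- The average of `f j * g j` over a (possibly empty) set of rows; by the
convention `0 / 0 = 0`, the average over an empty set of rows is `0`. -/
noncomputable def avgOver (N : ℕ) (f g : Fin N → ℝ) (s : Finset (Fin N)) : ℝ :=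
  (∑ j ∈ s, f j * g j) / s.card


noncomputable def Gfun (x : ℝ) : ℝ := Real.log ((3 + Real.exp x)/4) - x/4
noncomputable def Gd (x : ℝ) : ℝ := Real.exp x / (3 + Real.exp x) - 1/4

lemma Gfun_zero : Gfun 0 = 0 := by simp [Gfun]; norm_num
lemma Gd_zero : Gd 0 = 0 := by simp [Gd]; norm_num

lemma denom_pos (x : ℝ) : (0:ℝ) < 3 + Real.exp x := by positivity

lemma hasDerivAt_Gfun (x : ℝ) : HasDerivAt Gfun (Gd x) x := by
  have h1 : HasDerivAt (fun x => (3 + Real.exp x)/4) (Real.exp x / 4) x := by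
    simpa using (((Real.hasDerivAt_exp x).const_add 3).div_const 4)
  have h2 := h1.log (by positivity)
  have h3 : HasDerivAt (fun x : ℝ => x/4) (1/4 : ℝ) x := by
    simpa using (hasDerivAt_id x).div_const 4
  have := h2.sub h3
  convert this using 1
  have hd := denom_pos x
  · rfl
  · rfl
  · rfl
  unfold Gd
  congr 1
  field_simp

lemma hasDerivAt_Gd (x : ℝ) :
    HasDerivAt Gd (3 * Real.exp x / (3 + Real.exp x)^2) x := by
  have h1 : HasDerivAt (fun x => Real.exp x / (3 + Real.exp x))
      ((Real.exp x * (3 + Real.exp x) - Real.exp x * Real.exp x) / (3 + Real.exp x)^2) x :=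
    (Real.hasDerivAt_exp x).div ((Real.hasDerivAt_exp x).const_add 3) (ne_of_gt (denom_pos x))
  have h2 : HasDerivAt Gd
      ((Real.exp x * (3 + Real.exp x) - Real.exp x * Real.exp x) / (3 + Real.exp x)^2) x := by
    unfold Gd
    simpa using h1.sub_const (1/4)
  convert h2 using 1
  ring

lemma exp_three_eighths_le : Real.exp (3/8 : ℝ) ≤ 3/2 := by
  have h3 : Real.exp (3:ℝ) < 25 := by
    have h := Real.exp_one_lt_d9
    have : Real.exp (3:ℝ) = (Real.exp 1)^3 := by
      rw [← Real.exp_nat_mul]; norm_num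
    rw [this]
    have := pow_lt_pow_left₀ h (le_of_lt (Real.exp_pos 1)) (n := 3) (by norm_num)
    nlinarith
  have hpow : (Real.exp (3/8 : ℝ))^(8:ℕ) = Real.exp 3 := by
    rw [← Real.exp_nat_mul]; norm_num
  have h2 : (Real.exp (3/8 : ℝ))^(8:ℕ) < (3/2 : ℝ)^(8:ℕ) := by
    rw [hpow]; nlinarith
  exact le_of_lt (lt_of_pow_lt_pow_left₀ 8 (by norm_num) h2)

lemma Gd_le_on_pos : ∀ x ∈ Set.Icc (0:ℝ) (3/8), Gd x ≤ (2/9) * x := by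
  intro x hx
  have key : ‖Gd x - Gd 0‖ ≤ (2/9) * ‖x - 0‖ := by
    apply Convex.norm_image_sub_le_of_norm_hasDerivWithin_le
      (f' := fun y => 3 * Real.exp y / (3 + Real.exp y)^2)
      (fun y _ => (hasDerivAt_Gd y).hasDerivWithinAt) ?_ (convex_Icc _ _)
      (Set.left_mem_Icc.2 (by norm_num)) hx
    intro y hy
    have h1 : Real.exp y ≤ 3/2 :=
      le_trans (Real.exp_le_exp.2 hy.2) exp_three_eighths_le
    have h2 : (1:ℝ) ≤ Real.exp y := by
      rw [← Real.exp_zero]; exact Real.exp_le_exp.2 hy.1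
    have hd := denom_pos y
    rw [Real.norm_eq_abs, abs_of_nonneg (by positivity)]
    rw [div_le_iff₀ (by positivity)]
    nlinarith
  rw [Gd_zero, sub_zero, sub_zero, Real.norm_eq_abs, Real.norm_eq_abs,
    abs_of_nonneg hx.1] at key
  exact (le_abs_self _).trans key

lemma Gd_ge_on_neg : ∀ x ∈ Set.Icc (-(4/9) : ℝ) 0, (3/16) * x ≤ Gd x := by
  intro x hx
  have key : ‖Gd x - Gd 0‖ ≤ (3/16) * ‖x - 0‖ := by
    apply Convex.norm_image_sub_le_of_norm_hasDerivWithin_le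
      (f' := fun y => 3 * Real.exp y / (3 + Real.exp y)^2)
      (fun y _ => (hasDerivAt_Gd y).hasDerivWithinAt) ?_ (convex_Icc _ _)
      (Set.right_mem_Icc.2 (by norm_num)) hx
    intro y hy
    have h1 : Real.exp y ≤ 1 := by
      rw [← Real.exp_zero]; exact Real.exp_le_exp.2 hy.2
    have hd := denom_pos y
    rw [Real.norm_eq_abs, abs_of_nonneg (by positivity)]
    rw [div_le_iff₀ (by positivity)]
    nlinarith [Real.exp_pos y]
  rw [Gd_zero, sub_zero, sub_zero, Real.norm_eq_abs, Real.norm_eq_abs,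
    abs_of_nonpos hx.2] at key
  have := (abs_le.1 key).1
  nlinarith

lemma Gfun_le_pos : ∀ x ∈ Set.Icc (0:ℝ) (3/8), Gfun x ≤ x^2/9 := by
  have hmono : MonotoneOn (fun x => x^2/9 - Gfun x) (Set.Icc (0:ℝ) (3/8)) := by
    apply monotoneOn_of_deriv_nonneg (convex_Icc _ _)
    · exact ((continuous_pow 2).div_const 9 |>.sub
        (by
          have : Continuous Gfun := by
            apply Continuous.sub ?_ (by fun_prop)
            apply Continuous.log (by fun_prop)
            intro x; exact ne_of_gt (by positivity)
          exact this)).continuousOn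
    · intro x hx
      exact (((hasDerivAt_pow 2 x).div_const 9).sub (hasDerivAt_Gfun x)).differentiableAt.differentiableWithinAt
    · intro x hx
      rw [interior_Icc] at hx
      have hd : HasDerivAt (fun x => x^2/9 - Gfun x) ((2*x)/9 - Gd x) x := by
        have := ((hasDerivAt_pow 2 x).div_const 9).sub (hasDerivAt_Gfun x)
        simpa [Pi.sub_def] using this
      rw [hd.deriv]
      have := Gd_le_on_pos x ⟨le_of_lt hx.1, le_of_lt hx.2⟩
      linarith
  intro x hx
  have h0 : (fun x => x^2/9 - Gfun x) 0 ≤ (fun x => x^2/9 - Gfun x) x :=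
    hmono (Set.left_mem_Icc.2 (by norm_num)) hx hx.1
  simp only [Gfun_zero] at h0
  norm_num at h0
  linarith

lemma Gfun_le_neg : ∀ x ∈ Set.Icc (-(4/9):ℝ) 0, Gfun x ≤ (3/32) * x^2 := by
  have hmono : AntitoneOn (fun x => (3/32) * x^2 - Gfun x) (Set.Icc (-(4/9):ℝ) 0) := by
    apply antitoneOn_of_deriv_nonpos (convex_Icc _ _)
    · apply Continuous.continuousOn
      apply Continuous.sub (by fun_prop)
      apply Continuous.sub ?_ (by fun_prop)
      apply Continuous.log (by fun_prop)
      intro x; exact ne_of_gt (by positivity)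
    · intro x hx
      exact ((((hasDerivAt_pow 2 x).const_mul (3/32)).sub (hasDerivAt_Gfun x))).differentiableAt.differentiableWithinAt
    · intro x hx
      rw [interior_Icc] at hx
      have hd : HasDerivAt (fun x => (3/32) * x^2 - Gfun x) ((3/32)*(2*x) - Gd x) x := by
        have := ((hasDerivAt_pow 2 x).const_mul (3/32)).sub (hasDerivAt_Gfun x)
        simpa [Pi.sub_def] using this
      rw [hd.deriv]
      have := Gd_ge_on_neg x ⟨le_of_lt hx.1, le_of_lt hx.2⟩
      linarith
  intro x hx
  have h0 : (fun x => (3/32) * x^2 - Gfun x) 0 ≤ (fun x => (3/32) * x^2 - Gfun x) x :=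
    hmono hx (Set.right_mem_Icc.2 (by norm_num)) hx.2
  simp only [Gfun_zero] at h0
  norm_num at h0
  linarith

lemma expand_exp (b : ℝ) : (3 + Real.exp b)/4 = Real.exp (Gfun b + b/4) := by
  rw [Gfun, sub_add_cancel, Real.exp_log (by positivity)]

lemma core_up (s : ℝ) (h0 : 0 ≤ s) (h1 : s ≤ 1/12) :
    Real.exp (-(9/2*s)*(1/4+s)) * ((3 + Real.exp (9/2*s))/4) ≤ Real.exp (-(9/4)*s^2) := by
  rw [expand_exp, ← Real.exp_add]
  apply Real.exp_le_exp.2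
  have hG := Gfun_le_pos (9/2*s) ⟨by linarith, by linarith⟩
  nlinarith

lemma core_low (s : ℝ) (h0 : 0 ≤ s) (h1 : s ≤ 1/12) :
    Real.exp ((16/3*s)*(1/4-s)) * ((3 + Real.exp (-(16/3*s)))/4) ≤ Real.exp (-(8/3)*s^2) := by
  rw [expand_exp, ← Real.exp_add]
  apply Real.exp_le_exp.2
  have hG := Gfun_le_neg (-(16/3*s)) ⟨by linarith, by linarith⟩
  nlinarith

open Finset in
lemma chernoff (N : ℕ) (g : Fin N → Bool × Bool → ℝ) (a : ℝ) (b : ℝ) (hb : 0 ≤ b)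
    (hrow : ∀ j, (∑ v : Bool × Bool, Real.exp (g j v)) ≤ 4 * b) :
    (PMF.uniformOfFintype (Fin N → Bool × Bool)).toMeasure {ω | a ≤ ∑ j, g j (ω j)}
      ≤ ENNReal.ofReal (Real.exp (-a) * b ^ N) := by
  classical
  set S : Set (Fin N → Bool × Bool) := {ω | a ≤ ∑ j, g j (ω j)} with hS
  set C : ℕ := (Finset.univ.filter (fun ω => ω ∈ S)).card with hC
  -- Step 1: measure = C / 4^N
  have hcard : Fintype.card (Fin N → Bool × Bool) = 4 ^ N := by
    simp [Fintype.card_fun]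
  have hmeas : (PMF.uniformOfFintype (Fin N → Bool × Bool)).toMeasure S
      = (C : ENNReal) * ((4:ENNReal) ^ N)⁻¹ := by
    rw [PMF.toMeasure_apply_fintype]
    have : ∀ x : Fin N → Bool × Bool,
        S.indicator (PMF.uniformOfFintype (Fin N → Bool × Bool)) x
          = if x ∈ S then ((4:ENNReal) ^ N)⁻¹ else 0 := by
      intro x
      by_cases h : x ∈ S <;>
        simp [Set.indicator, h, PMF.uniformOfFintype_apply, hcard]
    simp only [this]
    rw [← Finset.sum_filter, Finset.sum_const, nsmul_eq_mul]
  -- Step 2: counting bound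
  have hcount : (C : ℝ) ≤ Real.exp (-a) * (4 * b) ^ N := by
    have h1 : (C : ℝ) ≤ ∑ ω : Fin N → Bool × Bool, Real.exp (∑ j, g j (ω j) - a) := by
      calc (C : ℝ) = ∑ ω ∈ Finset.univ.filter (fun ω => ω ∈ S), (1:ℝ) := by
              simp [hC]
        _ ≤ ∑ ω ∈ Finset.univ.filter (fun ω => ω ∈ S),
              Real.exp (∑ j, g j (ω j) - a) := by
              apply Finset.sum_le_sum
              intro ω hω
              rw [Finset.mem_filter] at hω
              have : (0:ℝ) ≤ ∑ j, g j (ω j) - a := by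
                have := hω.2; rw [hS] at this; simpa using this
              exact Real.one_le_exp this
        _ ≤ ∑ ω : Fin N → Bool × Bool, Real.exp (∑ j, g j (ω j) - a) := by
              apply Finset.sum_le_sum_of_subset_of_nonneg (Finset.filter_subset _ _)
              intro i _ _; positivity
    have h2 : ∑ ω : Fin N → Bool × Bool, Real.exp (∑ j, g j (ω j) - a)
        = Real.exp (-a) * ∏ j, ∑ v : Bool × Bool, Real.exp (g j v) := by
      rw [Fintype.prod_sum (f := fun j v => Real.exp (g j v)), Finset.mul_sum]
      apply Finset.sum_congr rfl
      intro ω _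
      rw [sub_eq_add_neg, Real.exp_add, Real.exp_sum, mul_comm]
    have h3 : ∏ j, ∑ v : Bool × Bool, Real.exp (g j v) ≤ (4*b) ^ N := by
      calc ∏ j, ∑ v : Bool × Bool, Real.exp (g j v)
          ≤ ∏ j : Fin N, (4*b) := by
            apply Finset.prod_le_prod
            · intro j _; positivity
            · intro j _; exact hrow j
        _ = (4*b)^N := by simp
    calc (C:ℝ) ≤ _ := h1
      _ = _ := h2
      _ ≤ _ := by
          apply mul_le_mul_of_nonneg_left h3 (le_of_lt (Real.exp_pos _))
  -- Step 3: combine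
  rw [hmeas]
  have h4 : ((4:ENNReal) ^ N)⁻¹ = ENNReal.ofReal (((4:ℝ) ^ N)⁻¹) := by
    rw [ENNReal.ofReal_inv_of_pos (by positivity)]
    congr 1
    rw [ENNReal.ofReal_pow (by norm_num)]
    norm_num
  have h5 : (C : ENNReal) = ENNReal.ofReal (C : ℝ) := by
    simp
  rw [h4, h5, ← ENNReal.ofReal_mul (by positivity)]
  apply ENNReal.ofReal_le_ofReal
  calc (C:ℝ) * ((4:ℝ)^N)⁻¹ ≤ (Real.exp (-a) * (4*b)^N) * ((4:ℝ)^N)⁻¹ := by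
        apply mul_le_mul_of_nonneg_right hcount (by positivity)
    _ = Real.exp (-a) * b ^ N := by
        rw [mul_pow]
        field_simp

lemma chsh_row (a a' b b' : ℝ) (ha : a = 1 ∨ a = -1) (ha' : a' = 1 ∨ a' = -1)
    (hb : b = 1 ∨ b = -1) (hb' : b' = 1 ∨ b' = -1) :
    a*b + a*b' + a'*b - a'*b' ≤ 2 := by
  rcases ha with rfl|rfl <;> rcases ha' with rfl|rfl <;> rcases hb with rfl|rfl <;>
    rcases hb' with rfl|rfl <;> norm_num

lemma sum_exp_le (l u v w x : ℝ) (hl : 0 ≤ l) (hu : u = 1 ∨ u = -1)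
    (hv : v = 1 ∨ v = -1) (hw : w = 1 ∨ w = -1) (hx : x = 1 ∨ x = -1)
    (hs : u + v + w + x ≤ 2) :
    Real.exp (l*u) + Real.exp (l*v) + Real.exp (l*w) + Real.exp (l*x)
      ≤ 3 + Real.exp (2*l) := by
  have ht : (1:ℝ) ≤ Real.exp l := Real.one_le_exp hl
  have htp : (0:ℝ) < Real.exp l := Real.exp_pos l
  have hneg : Real.exp (l * (-1)) = (Real.exp l)⁻¹ := by
    rw [mul_neg_one, Real.exp_neg]
  have h2l : Real.exp (2*l) = (Real.exp l)^2 := by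
    rw [two_mul, Real.exp_add]; ring
  have hcube : (0:ℝ) ≤ (Real.exp l - 1)^3 := pow_nonneg (by linarith) 3
  have hinv : Real.exp l * (Real.exp l)⁻¹ = 1 := mul_inv_cancel₀ (ne_of_gt htp)
  rcases hu with rfl|rfl <;> rcases hv with rfl|rfl <;> rcases hw with rfl|rfl <;>
    rcases hx with rfl|rfl <;>
    simp only [mul_one, hneg, h2l] <;>
    first
      | linarith
      | nlinarith [hcube, hinv, ht, htp, inv_pos.2 htp, sq_nonneg (Real.exp l - 1)]

lemma avg_diff {ι : Type*} (Nr : ℝ) (hNr : 0 < Nr) (s : Finset ι) (f : ι → ℝ)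
    (hf : ∀ j ∈ s, |f j| ≤ 1) :
    |(∑ j ∈ s, f j) / (s.card : ℝ) - 4 * (∑ j ∈ s, f j) / Nr|
      ≤ (4/Nr) * |(s.card : ℝ) - Nr/4| := by
  rcases Nat.eq_zero_or_pos s.card with h0 | hpos
  · rw [Finset.card_eq_zero] at h0
    subst h0
    simp only [Finset.sum_empty, Finset.card_empty, Nat.cast_zero, zero_div, mul_zero,
      zero_div, sub_zero, abs_zero]
    positivity
  · set M := ∑ j ∈ s, f j with hM
    set n := (s.card : ℝ) with hn
    have hn1 : (1:ℝ) ≤ n := by rw [hn]; exact_mod_cast hpos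
    have hMle : |M| ≤ n := by
      calc |M| ≤ ∑ j ∈ s, |f j| := Finset.abs_sum_le_sum_abs _ _
        _ ≤ ∑ j ∈ s, 1 := Finset.sum_le_sum hf
        _ = n := by simp [hn]
    have heq : M/n - 4*M/Nr = M * (Nr - 4*n)/(n*Nr) := by
      field_simp
    rw [heq, abs_div, abs_mul]
    rw [div_le_iff₀ (by positivity : (0:ℝ) < |n * Nr|)]
    have habs : |Nr - 4*n| = 4 * |n - Nr/4| := by
      have h : Nr - 4*n = -(4*(n - Nr/4)) := by ring
      rw [h, abs_neg, abs_mul]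
      norm_num
    have habs2 : |n * Nr| = n * Nr := abs_of_pos (by positivity)
    rw [habs, habs2]
    have h1 : (0:ℝ) ≤ |n - Nr/4| := abs_nonneg _
    have hrw : 4/Nr * |n - Nr/4| * (n*Nr) = 4*n*|n - Nr/4| := by
      field_simp
    rw [hrw]
    nlinarith [abs_nonneg M]

noncomputable def prodF (N : ℕ) (A A' B B' : Fin N → ℝ) (c : Bool × Bool) (j : Fin N) : ℝ :=
  (if c.1 then A j else A' j) * (if c.2 then B j else B' j)

noncomputable def chi (c : Bool × Bool) : ℝ := if c = (false, false) then -1 else 1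

lemma chi_cases (c : Bool × Bool) : chi c = 1 ∨ chi c = -1 := by
  unfold chi; split <;> simp

lemma prodF_cases (N : ℕ) (A A' B B' : Fin N → ℝ)
    (hA : ∀ j, A j = 1 ∨ A j = -1) (hA' : ∀ j, A' j = 1 ∨ A' j = -1)
    (hB : ∀ j, B j = 1 ∨ B j = -1) (hB' : ∀ j, B' j = 1 ∨ B' j = -1)
    (c : Bool × Bool) (j : Fin N) :
    prodF N A A' B B' c j = 1 ∨ prodF N A A' B B' c j = -1 := by
  have mul_pm : ∀ x y : ℝ, (x = 1 ∨ x = -1) → (y = 1 ∨ y = -1) → (x*y = 1 ∨ x*y = -1) := by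
    intro x y hx hy
    rcases hx with rfl|rfl <;> rcases hy with rfl|rfl <;> norm_num
  unfold prodF
  rcases c with ⟨c1, c2⟩
  cases c1 <;> cases c2 <;> simp only [Bool.false_eq_true, if_true, if_false] <;>
    apply mul_pm <;> first | exact hA j | exact hA' j | exact hB j | exact hB' j

section main
variable (N : ℕ) (A A' B B' : Fin N → ℝ)

lemma pointwise_bound (hN : 0 < N)
    (hA : ∀ j, A j = 1 ∨ A j = -1) (hA' : ∀ j, A' j = 1 ∨ A' j = -1)
    (hB : ∀ j, B j = 1 ∨ B j = -1) (hB' : ∀ j, B' j = 1 ∨ B' j = -1)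
    (η : ℝ) (ω : Fin N → Bool × Bool)
    (hT : ∑ j, chi (ω j) * prodF N A A' B B' (ω j) j ≤ (2 + η/3) * N / 4)
    (hn : ∀ c : Bool × Bool, |((obsRows N ω c).card : ℝ) - (N : ℝ)/4| ≤ η/24 * N) :
    avgOver N A B (obsRows N ω (true, true)) + avgOver N A B' (obsRows N ω (true, false))
      + avgOver N A' B (obsRows N ω (false, true))
      - avgOver N A' B' (obsRows N ω (false, false)) ≤ 2 + η := by
  have hNr : (0:ℝ) < N := by exact_mod_cast hN
  set P := prodF N A A' B B' with hP
  set Sc : Bool × Bool → ℝ := fun c => ∑ j ∈ obsRows N ω c, P c j with hSc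
  set nc : Bool × Bool → ℝ := fun c => ((obsRows N ω c).card : ℝ) with hnc
  -- fiber decomposition
  have hfib : ∑ j, chi (ω j) * P (ω j) j = ∑ c : Bool × Bool, chi c * Sc c := by
    rw [← Finset.sum_fiberwise Finset.univ (fun j => ω j) (fun j => chi (ω j) * P (ω j) j)]
    apply Finset.sum_congr rfl
    intro c _
    rw [hSc, Finset.mul_sum]
    apply Finset.sum_congr rfl
    intro j hj
    simp only [Finset.mem_filter] at hj
    rw [hj.2]
  -- per-c bound
  have key : ∀ c : Bool × Bool, chi c * (Sc c / nc c)
      ≤ chi c * (4 * Sc c / N) + (4/(N:ℝ)) * |nc c - (N:ℝ)/4| := by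
    intro c
    have hd := avg_diff (N : ℝ) hNr (obsRows N ω c) (P c) (fun j _ => by
      rcases prodF_cases N A A' B B' hA hA' hB hB' c j with h|h <;> rw [hP, h] <;> norm_num)
    have habs := abs_le.1 hd
    rcases chi_cases c with h1|h1 <;> rw [h1] <;>
      simp only [one_mul, neg_one_mul] <;> linarith [habs.1, habs.2]
  -- expand the goal as a sum over c
  have hgoal : avgOver N A B (obsRows N ω (true, true))
      + avgOver N A B' (obsRows N ω (true, false))
      + avgOver N A' B (obsRows N ω (false, true))
      - avgOver N A' B' (obsRows N ω (false, false))
      = ∑ c : Bool × Bool, chi c * (Sc c / nc c) := by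
    rw [Fintype.sum_prod_type]
    simp only [Fintype.sum_bool]
    unfold avgOver chi
    simp only [hSc, hnc, hP]
    unfold prodF
    norm_num
    ring
  rw [hgoal]
  have hsum : ∑ c : Bool × Bool, chi c * (Sc c / nc c)
      ≤ ∑ c : Bool × Bool, (chi c * (4 * Sc c / N) + (4/(N:ℝ)) * |nc c - (N:ℝ)/4|) :=
    Finset.sum_le_sum (fun c _ => key c)
  rw [Finset.sum_add_distrib] at hsum
  have h1 : ∑ c : Bool × Bool, chi c * (4 * Sc c / N) = (4/(N:ℝ)) * ∑ c : Bool × Bool, chi c * Sc c := by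
    rw [Finset.mul_sum]
    apply Finset.sum_congr rfl
    intro c _
    field_simp
  have h2 : ∑ c : Bool × Bool, (4/(N:ℝ)) * |nc c - (N:ℝ)/4| ≤ 4 * ((4/(N:ℝ)) * (η/24 * N)) := by
    have : ∀ c : Bool × Bool, (4/(N:ℝ)) * |nc c - (N:ℝ)/4| ≤ (4/(N:ℝ)) * (η/24 * N) := by
      intro c
      exact mul_le_mul_of_nonneg_left (hn c) (by positivity)
    calc ∑ c : Bool × Bool, (4/(N:ℝ)) * |nc c - (N:ℝ)/4|
        ≤ ∑ _c : Bool × Bool, (4/(N:ℝ)) * (η/24 * N) := Finset.sum_le_sum (fun c _ => this c)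
      _ = 4 * ((4/(N:ℝ)) * (η/24 * N)) := by
          rw [Finset.sum_const]
          norm_num [Fintype.card_prod]
  have h3 : (4/(N:ℝ)) * ∑ c : Bool × Bool, chi c * Sc c ≤ (4/(N:ℝ)) * ((2 + η/3) * N / 4) := by
    apply mul_le_mul_of_nonneg_left _ (by positivity)
    rw [← hfib]
    exact hT
  have h4 : (4/(N:ℝ)) * ((2 + η/3) * N / 4) = 2 + η/3 := by
    field_simp
  have h5 : 4 * ((4/(N:ℝ)) * (η/24 * N)) = 2*η/3 := by
    field_simp
    ring
  calc ∑ c : Bool × Bool, chi c * (Sc c / nc c) ≤ _ := hsum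
    _ ≤ (4/(N:ℝ)) * ((2 + η/3) * N / 4) + 4 * ((4/(N:ℝ)) * (η/24 * N)) := by
        rw [h1] at *
        exact add_le_add h3 h2
    _ = 2 + η := by rw [h4, h5]; ring

end main

lemma count_row (l : ℝ) (c : Bool × Bool) :
    ∑ v : Bool × Bool, Real.exp (l * (if v = c then (1:ℝ) else 0)) = Real.exp l + 3 := by
  classical
  have h : ∀ v : Bool × Bool, Real.exp (l * (if v = c then (1:ℝ) else 0))
      = (if v = c then Real.exp l - 1 else 0) + 1 := by
    intro v
    split <;> simp [Real.exp_zero]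
  simp only [h]
  rw [Finset.sum_add_distrib, Finset.sum_ite_eq' Finset.univ c (fun _ => Real.exp l - 1)]
  simp [Fintype.card_prod]
  ring

lemma row_exp_bound (N : ℕ) (A A' B B' : Fin N → ℝ)
    (hA : ∀ j, A j = 1 ∨ A j = -1) (hA' : ∀ j, A' j = 1 ∨ A' j = -1)
    (hB : ∀ j, B j = 1 ∨ B j = -1) (hB' : ∀ j, B' j = 1 ∨ B' j = -1)
    (l : ℝ) (hl : 0 ≤ l) (j : Fin N) :
    ∑ v : Bool × Bool, Real.exp (l * (chi v * prodF N A A' B B' v j))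
      ≤ 4 * ((3 + Real.exp (2*l))/4) := by
  have mul_pm : ∀ x y : ℝ, (x = 1 ∨ x = -1) → (y = 1 ∨ y = -1) → (x*y = 1 ∨ x*y = -1) := by
    intro x y hx hy
    rcases hx with rfl|rfl <;> rcases hy with rfl|rfl <;> norm_num
  rw [Fintype.sum_prod_type]
  simp only [Fintype.sum_bool]
  have e1 : chi (true, true) = 1 := by simp [chi]
  have e2 : chi (true, false) = 1 := by simp [chi]
  have e3 : chi (false, true) = 1 := by simp [chi]
  have e4 : chi (false, false) = -1 := by simp [chi]
  have p1 : prodF N A A' B B' (true, true) j = A j * B j := by simp [prodF]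
  have p2 : prodF N A A' B B' (true, false) j = A j * B' j := by simp [prodF]
  have p3 : prodF N A A' B B' (false, true) j = A' j * B j := by simp [prodF]
  have p4 : prodF N A A' B B' (false, false) j = A' j * B' j := by simp [prodF]
  rw [e1, e2, e3, e4, p1, p2, p3, p4]
  have hkey := sum_exp_le l (A j * B j) (A j * B' j) (A' j * B j) (-(A' j * B' j)) hl
    (mul_pm _ _ (hA j) (hB j)) (mul_pm _ _ (hA j) (hB' j)) (mul_pm _ _ (hA' j) (hB j))
    (by rcases mul_pm _ _ (hA' j) (hB' j) with h|h <;> rw [h] <;> norm_num)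
    (by have := chsh_row (A j) (A' j) (B j) (B' j) (hA j) (hA' j) (hB j) (hB' j); linarith)
  have hrw : l * (-1 * (A' j * B' j)) = l * (-(A' j * B' j)) := by ring
  rw [one_mul, one_mul, one_mul, hrw]
  linarith

lemma avg_abs_le_one (N : ℕ) (f g : Fin N → ℝ) (hfg : ∀ j, |f j * g j| ≤ 1)
    (s : Finset (Fin N)) : |avgOver N f g s| ≤ 1 := by
  unfold avgOver
  rcases Nat.eq_zero_or_pos s.card with h0 | hpos
  · rw [Finset.card_eq_zero] at h0
    subst h0
    simp
  · have hn : (0:ℝ) < s.card := by exact_mod_cast hpos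
    rw [abs_div, abs_of_pos hn, div_le_one hn]
    calc |∑ j ∈ s, f j * g j| ≤ ∑ j ∈ s, |f j * g j| := Finset.abs_sum_le_sum_abs _ _
      _ ≤ ∑ _j ∈ s, (1:ℝ) := Finset.sum_le_sum (fun j _ => hfg j)
      _ = s.card := by simp

set_option maxHeartbeats 2000000 in
/-- Theorem 1 (finite-sample CHSH inequality): given an `N × 4` table of numbers
`±1` with columns `A, A', B, B'`, if in every row, independently and uniformly
at random, just one of `A, A'` and just one of `B, B'` is observed (two independent
fair coins per row, independent across rows), then for any `η ≥ 0`,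
`⟨AB⟩_obs + ⟨AB'⟩_obs + ⟨A'B⟩_obs − ⟨A'B'⟩_obs ≤ 2 + η`
with probability at least `1 − 8 exp(−N (η/16)²)`. -/
theorem finite_sample_chsh (N : ℕ) (hN : 0 < N) (A A' B B' : Fin N → ℝ)
    (hA : ∀ j, A j = 1 ∨ A j = -1) (hA' : ∀ j, A' j = 1 ∨ A' j = -1)
    (hB : ∀ j, B j = 1 ∨ B j = -1) (hB' : ∀ j, B' j = 1 ∨ B' j = -1)
    (η : ℝ) (hη : 0 ≤ η) :
    ENNReal.ofReal (1 - 8 * Real.exp (-(N : ℝ) * (η / 16) ^ 2)) ≤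
      (PMF.uniformOfFintype (Fin N → Bool × Bool)).toMeasure
        {ω | avgOver N A B (obsRows N ω (true, true))
            + avgOver N A B' (obsRows N ω (true, false))
            + avgOver N A' B (obsRows N ω (false, true))
            - avgOver N A' B' (obsRows N ω (false, false)) ≤ 2 + η} := by
  classical
  set E := Real.exp (-(N : ℝ) * (η / 16) ^ 2) with hE
  set Good : Set (Fin N → Bool × Bool) :=
    {ω | avgOver N A B (obsRows N ω (true, true))
        + avgOver N A B' (obsRows N ω (true, false))
        + avgOver N A' B (obsRows N ω (false, true))
        - avgOver N A' B' (obsRows N ω (false, false)) ≤ 2 + η} with hGood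
  set μ := (PMF.uniformOfFintype (Fin N → Bool × Bool)).toMeasure with hμ
  have hNr : (0:ℝ) < N := by exact_mod_cast hN
  -- trivial case
  rcases le_or_gt (1 - 8 * E) 0 with htriv | htriv
  · rw [ENNReal.ofReal_eq_zero.2 htriv]
    exact zero_le
  have hEpos : 0 < E := Real.exp_pos _
  have hE18 : E < 1/8 := by linarith
  have hlog2 : (0.6931471803 : ℝ) < Real.log 2 := Real.log_two_gt_d9
  have hX : 768 * Real.log 2 < (N:ℝ) * η^2 := by
    have h := Real.log_lt_log hEpos hE18
    rw [hE, Real.log_exp] at h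
    have h8 : Real.log (1/8) = -(3 * Real.log 2) := by
      rw [one_div, Real.log_inv, show (8:ℝ) = 2^3 by norm_num, Real.log_pow]
      push_cast; ring
    rw [h8] at h
    nlinarith
  have hη0 : 0 < η := by
    rcases lt_or_eq_of_le hη with h | h
    · exact h
    · exfalso; rw [← h] at hX; nlinarith
  rcases lt_or_ge 2 η with hη2 | hη2
  · -- η > 2 : the event is everything
    have habs : ∀ (f g : Fin N → ℝ), (∀ j, f j = 1 ∨ f j = -1) → (∀ j, g j = 1 ∨ g j = -1) →
        ∀ s : Finset (Fin N), |avgOver N f g s| ≤ 1 := by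
      intro f g hf hg s
      apply avg_abs_le_one
      intro j
      rcases hf j with h|h <;> rcases hg j with h2|h2 <;> rw [h, h2] <;> norm_num
    have huniv : Good = Set.univ := by
      apply Set.eq_univ_of_forall
      intro ω
      rw [hGood]
      simp only [Set.mem_setOf_eq]
      have h1 := abs_le.1 (habs A B hA hB (obsRows N ω (true, true)))
      have h2 := abs_le.1 (habs A B' hA hB' (obsRows N ω (true, false)))
      have h3 := abs_le.1 (habs A' B hA' hB (obsRows N ω (false, true)))
      have h4 := abs_le.1 (habs A' B' hA' hB' (obsRows N ω (false, false)))
      linarith [h1.1, h1.2, h2.1, h2.2, h3.1, h3.2, h4.1, h4.2]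
    rw [huniv, measure_univ]
    exact ENNReal.ofReal_le_one.2 (by nlinarith)
  -- main case : 0 < η ≤ 2
  set P := prodF N A A' B B' with hP
  set l1 : ℝ := 9/2 * (η/24) with hl1
  set l2 : ℝ := 16/3 * (η/24) with hl2
  set l3 : ℝ := 9/4 * (η/24) with hl3
  have hl1p : 0 < l1 := by rw [hl1]; positivity
  have hl2p : 0 < l2 := by rw [hl2]; positivity
  have hl3p : 0 < l3 := by rw [hl3]; positivity
  have hs0 : (0:ℝ) ≤ η/24 := by positivity
  have hs12 : η/24 ≤ 1/12 := by linarith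
  -- the events
  set EW : Set (Fin N → Bool × Bool) :=
    {ω | l3 * ((2 + η/3) * N / 4) ≤ ∑ j, l3 * (chi (ω j) * P (ω j) j)} with hEW
  set EU : Bool × Bool → Set (Fin N → Bool × Bool) := fun c =>
    {ω | l1 * ((1/4 + η/24) * N) ≤ ∑ j, l1 * (if ω j = c then (1:ℝ) else 0)} with hEU
  set EL : Bool × Bool → Set (Fin N → Bool × Bool) := fun c =>
    {ω | -l2 * ((1/4 - η/24) * N) ≤ ∑ j, -l2 * (if ω j = c then (1:ℝ) else 0)} with hEL
  -- counting identity
  have hcount : ∀ (ω : Fin N → Bool × Bool) (c : Bool × Bool),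
      ∑ j, (if ω j = c then (1:ℝ) else 0) = ((obsRows N ω c).card : ℝ) := by
    intro ω c
    rw [Finset.sum_boole]
    congr 1
  -- Chernoff bounds
  have hbW : μ EW ≤ ENNReal.ofReal E := by
    have hcher := chernoff N (fun j v => l3 * (chi v * P v j)) (l3 * ((2 + η/3) * N / 4))
      ((3 + Real.exp (2*l3))/4) (by positivity)
      (fun j => row_exp_bound N A A' B B' hA hA' hB hB' l3 (le_of_lt hl3p) j)
    refine le_trans hcher (ENNReal.ofReal_le_ofReal ?_)
    have hcu := core_up (η/24) hs0 hs12
    calc Real.exp (-(l3 * ((2 + η/3) * N / 4))) * ((3 + Real.exp (2*l3))/4) ^ N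
        = (Real.exp (-(9/2*(η/24))*(1/4+η/24)) * ((3 + Real.exp (9/2*(η/24)))/4)) ^ N := by
          have h1 : -(l3 * ((2 + η/3) * (N:ℝ) / 4))
              = (N:ℕ) * (-(9/2*(η/24))*(1/4+η/24)) := by
            rw [hl3]; push_cast; ring
          have h2 : 2*l3 = 9/2*(η/24) := by rw [hl3]; ring
          rw [mul_pow, ← Real.exp_nat_mul, h1, h2]
      _ ≤ (Real.exp (-(9/4)*(η/24)^2)) ^ N := pow_le_pow_left₀ (by positivity) hcu N
      _ = E := by
          rw [← Real.exp_nat_mul, hE]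
          congr 1
          ring
  -- upper count bounds
  have hbU : ∀ c : Bool × Bool, μ (EU c) ≤ ENNReal.ofReal E := by
    intro c
    have hrow : ∀ j : Fin N, ∑ v : Bool × Bool, Real.exp (l1 * (if v = c then (1:ℝ) else 0))
        ≤ 4 * ((3 + Real.exp l1)/4) := by
      intro j
      rw [count_row]
      linarith
    have hcher := chernoff N (fun _ v => l1 * (if v = c then (1:ℝ) else 0))
      (l1 * ((1/4 + η/24) * N)) ((3 + Real.exp l1)/4) (by positivity) hrow
    refine le_trans hcher (ENNReal.ofReal_le_ofReal ?_)
    have hcu := core_up (η/24) hs0 hs12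
    calc Real.exp (-(l1 * ((1/4 + η/24) * N))) * ((3 + Real.exp l1)/4) ^ N
        = (Real.exp (-(9/2*(η/24))*(1/4+η/24)) * ((3 + Real.exp (9/2*(η/24)))/4)) ^ N := by
          have h1 : -(l1 * ((1/4 + η/24) * (N:ℝ)))
              = (N:ℕ) * (-(9/2*(η/24))*(1/4+η/24)) := by
            rw [hl1]; push_cast; ring
          rw [mul_pow, ← Real.exp_nat_mul, h1, hl1]
      _ ≤ (Real.exp (-(9/4)*(η/24)^2)) ^ N := pow_le_pow_left₀ (by positivity) hcu N
      _ = E := by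
          rw [← Real.exp_nat_mul, hE]
          congr 1
          ring
  -- lower count bounds
  have hbL : ∀ c : Bool × Bool, μ (EL c) ≤ ENNReal.ofReal ((3/4) * E) := by
    intro c
    have hrow : ∀ j : Fin N, ∑ v : Bool × Bool, Real.exp (-l2 * (if v = c then (1:ℝ) else 0))
        ≤ 4 * ((3 + Real.exp (-l2))/4) := by
      intro j
      rw [count_row]
      linarith
    have hcher := chernoff N (fun _ v => -l2 * (if v = c then (1:ℝ) else 0))
      (-l2 * ((1/4 - η/24) * N)) ((3 + Real.exp (-l2))/4) (by positivity) hrow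
    refine le_trans hcher (ENNReal.ofReal_le_ofReal ?_)
    have hcl := core_low (η/24) hs0 hs12
    have step1 : Real.exp (-(-l2 * ((1/4 - η/24) * N))) * ((3 + Real.exp (-l2))/4) ^ N
        ≤ (Real.exp (-(8/3)*(η/24)^2)) ^ N := by
      calc Real.exp (-(-l2 * ((1/4 - η/24) * N))) * ((3 + Real.exp (-l2))/4) ^ N
          = (Real.exp ((16/3*(η/24))*(1/4-η/24)) * ((3 + Real.exp (-(16/3*(η/24))))/4)) ^ N := by
            have h1 : -(-l2 * ((1/4 - η/24) * (N:ℝ)))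
                = (N:ℕ) * ((16/3*(η/24))*(1/4-η/24)) := by
              rw [hl2]; push_cast; ring
            have h2 : -l2 = -(16/3*(η/24)) := by rw [hl2]
            rw [mul_pow, ← Real.exp_nat_mul, h1, h2]
        _ ≤ (Real.exp (-(8/3)*(η/24)^2)) ^ N := pow_le_pow_left₀ (by positivity) hcl N
    refine le_trans step1 ?_
    -- exp(-(8/3)s²)^N ≤ (3/4) E
    have hD : (1:ℝ)/3 ≤ (8/3)*(η/24)^2*N - (N:ℝ)*(η/16)^2 := by
      have heq : (8/3)*(η/24)^2*(N:ℝ) - (N:ℝ)*(η/16)^2 = ((N:ℝ)*η^2) * (5/6912) := by ring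
      rw [heq]
      nlinarith
    have hexp : Real.exp (-(8/3)*(η/24)^2*N) ≤ (3/4) * E := by
      have hfac : Real.exp (-(8/3)*(η/24)^2*N)
          = E * Real.exp (-((8/3)*(η/24)^2*N - (N:ℝ)*(η/16)^2)) := by
        rw [hE, ← Real.exp_add]
        congr 1
        ring
      rw [hfac]
      have h43 : Real.exp (-((8/3)*(η/24)^2*N - (N:ℝ)*(η/16)^2)) ≤ 3/4 := by
        rw [Real.exp_neg]
        rw [inv_le_comm₀ (Real.exp_pos _) (by norm_num)]
        have := Real.add_one_le_exp ((8/3)*(η/24)^2*N - (N:ℝ)*(η/16)^2)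
        linarith
      nlinarith
    calc (Real.exp (-(8/3)*(η/24)^2)) ^ N = Real.exp (-(8/3)*(η/24)^2*N) := by
          rw [← Real.exp_nat_mul]; congr 1; ring
      _ ≤ (3/4) * E := hexp
  -- inclusion of the bad event
  have hsub : Goodᶜ ⊆ EW ∪ (EU (true,true) ∪ (EU (true,false) ∪ (EU (false,true) ∪
      (EU (false,false) ∪ (EL (true,true) ∪ (EL (true,false) ∪ (EL (false,true) ∪
      EL (false,false)))))))) := by
    intro ω hω
    by_contra hcon
    simp only [Set.mem_union, not_or] at hcon
    obtain ⟨hw, hu1, hu2, hu3, hu4, hv1, hv2, hv3, hv4⟩ := hcon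
    apply hω
    rw [hGood]
    simp only [Set.mem_setOf_eq]
    -- extract hT
    have hT : ∑ j, chi (ω j) * P (ω j) j ≤ (2 + η/3) * N / 4 := by
      rw [hEW] at hw
      simp only [Set.mem_setOf_eq, not_le] at hw
      rw [← Finset.mul_sum] at hw
      exact le_of_lt ((mul_lt_mul_iff_right₀ hl3p).1 hw)
    -- extract the count bounds
    have hnu : ∀ c : Bool × Bool, ω ∉ EU c →
        ((obsRows N ω c).card : ℝ) - (N:ℝ)/4 < η/24 * N := by
      intro c hc
      rw [hEU] at hc
      simp only [Set.mem_setOf_eq, not_le] at hc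
      rw [← Finset.mul_sum, hcount ω c] at hc
      have := (mul_lt_mul_iff_right₀ hl1p).1 hc
      linarith
    have hnl : ∀ c : Bool × Bool, ω ∉ EL c →
        -(η/24 * N) < ((obsRows N ω c).card : ℝ) - (N:ℝ)/4 := by
      intro c hc
      rw [hEL] at hc
      simp only [Set.mem_setOf_eq, not_le] at hc
      rw [← Finset.mul_sum, hcount ω c] at hc
      have h2 : l2 * ((1/4 - η/24) * N) < l2 * ((obsRows N ω c).card : ℝ) := by nlinarith
      have := (mul_lt_mul_iff_right₀ hl2p).1 h2
      linarith
    have hn : ∀ c : Bool × Bool, |((obsRows N ω c).card : ℝ) - (N:ℝ)/4| ≤ η/24 * N := by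
      intro c
      rcases c with ⟨b1, b2⟩
      cases b1 <;> cases b2 <;>
        [exact abs_le.2 ⟨le_of_lt (hnl _ hv4), le_of_lt (hnu _ hu4)⟩;
         exact abs_le.2 ⟨le_of_lt (hnl _ hv3), le_of_lt (hnu _ hu3)⟩;
         exact abs_le.2 ⟨le_of_lt (hnl _ hv2), le_of_lt (hnu _ hu2)⟩;
         exact abs_le.2 ⟨le_of_lt (hnl _ hv1), le_of_lt (hnu _ hu1)⟩]
    exact pointwise_bound N A A' B B' hN hA hA' hB hB' η ω hT hn
  -- assemble the measure bound
  have step : ∀ (X Y : Set (Fin N → Bool × Bool)) (x y : ENNReal),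
      μ X ≤ x → μ Y ≤ y → μ (X ∪ Y) ≤ x + y := by
    intro X Y x y hx hy
    exact le_trans (measure_union_le X Y) (add_le_add hx hy)
  have hmerge : ∀ a b : ℝ, 0 ≤ a → 0 ≤ b →
      ENNReal.ofReal a + ENNReal.ofReal b = ENNReal.ofReal (a + b) := by
    intro a b ha hb
    rw [ENNReal.ofReal_add ha hb]
  have hbad : μ Goodᶜ ≤ ENNReal.ofReal (8 * E) := by
    have h34 : (0:ℝ) ≤ 3/4 * E := by positivity
    have hbig := step _ _ _ _ hbW (step _ _ _ _ (hbU (true,true)) (step _ _ _ _ (hbU (true,false))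
      (step _ _ _ _ (hbU (false,true)) (step _ _ _ _ (hbU (false,false))
      (step _ _ _ _ (hbL (true,true)) (step _ _ _ _ (hbL (true,false))
      (step _ _ _ _ (hbL (false,true)) (hbL (false,false)))))))))
    refine le_trans (le_trans (measure_mono hsub) hbig) ?_
    rw [hmerge _ _ h34 h34, hmerge _ _ h34 (by positivity), hmerge _ _ h34 (by positivity),
      hmerge _ _ (le_of_lt hEpos) (by positivity), hmerge _ _ (le_of_lt hEpos) (by positivity),
      hmerge _ _ (le_of_lt hEpos) (by positivity), hmerge _ _ (le_of_lt hEpos) (by positivity),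
      hmerge _ _ (le_of_lt hEpos) (by positivity)]
    apply ENNReal.ofReal_le_ofReal
    linarith
  -- conclude
  have hGm : MeasurableSet Good := (Set.toFinite Good).measurableSet
  have hcomp : μ Good + μ Goodᶜ = 1 := by
    rw [measure_add_measure_compl hGm, measure_univ]
  have h8 : ENNReal.ofReal (1 - 8*E) + ENNReal.ofReal (8*E) = 1 := by
    rw [← ENNReal.ofReal_add (by linarith) (by positivity)]
    norm_num
  have hchain : ENNReal.ofReal (1 - 8*E) + ENNReal.ofReal (8*E) ≤ μ Good + ENNReal.ofReal (8*E) := by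
    rw [h8, ← hcomp]
    exact add_le_add_right hbad _
  exact (ENNReal.add_le_add_iff_right ENNReal.ofReal_ne_top).1 hchain
end

section
/- Let x_1, …, x_N be numbers each equal to ±1, with population average m = (1/N)∑_j x_j. If a subset of size n is drawn uniformly at random among all subsets of {1,…,N} of size n, and m_obs denotes the average of x_j over the sampled indices, then for every ε > 0, Pr(m_obs ≥ m + 2ε) ≤ exp(−2nε²). -/
open Finset Real
open scoped Classical

lemma choose_ratio (N K j : ℕ) (h : K ≤ N) : K.choose j * N ^ j ≤ N.choose j * K ^ j := by
  induction j with
  | zero => simp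
  | succ j ih =>
    rcases le_or_gt (j+1) K with hj | hj
    · have key : (K - j) * N ≤ (N - j) * K := by
        have hjK : j ≤ K := by omega
        zify [hjK, le_trans hjK h]
        nlinarith [hjK, h]
      have main : K.choose (j+1) * N ^ (j+1) * (j+1) ≤ N.choose (j+1) * K ^ (j+1) * (j+1) := by
        calc K.choose (j+1) * N ^ (j+1) * (j+1)
            = (K.choose (j+1) * (j+1)) * N ^ j * N := by ring
          _ = (K.choose j * (K - j)) * N ^ j * N := by rw [Nat.choose_succ_right_eq]
          _ = (K.choose j * N ^ j) * ((K - j) * N) := by ring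
          _ ≤ (N.choose j * K ^ j) * ((N - j) * K) := Nat.mul_le_mul ih key
          _ = (N.choose j * (N - j)) * K ^ j * K := by ring
          _ = (N.choose (j+1) * (j+1)) * K ^ j * K := by rw [Nat.choose_succ_right_eq]
          _ = N.choose (j+1) * K ^ (j+1) * (j+1) := by ring
      exact Nat.le_of_mul_le_mul_right main (Nat.succ_pos j)
    · rw [Nat.choose_eq_zero_of_lt hj]
      simp

lemma count_supersets {α : Type*} [Fintype α] [DecidableEq α] (n : ℕ) (u : Finset α)
    (hu : u.card ≤ n) :
    ((powersetCard n (univ : Finset α)).filter (fun s => u ⊆ s)).card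
      = (Fintype.card α - u.card).choose (n - u.card) := by
  have hcs : (univ \ u).card = Fintype.card α - u.card := by
    rw [card_sdiff_of_subset (subset_univ u), card_univ]
  rw [← hcs, ← Finset.card_powersetCard (n - u.card) (univ \ u)]
  apply Finset.card_bij' (fun s _ => s \ u) (fun v _ => v ∪ u)
  · intro s hs
    simp only [mem_filter, mem_powersetCard] at hs
    simp only [mem_powersetCard]
    exact ⟨sdiff_subset_sdiff (subset_univ s) (le_refl u), by rw [card_sdiff_of_subset hs.2, hs.1.2]⟩
  · intro v hv
    simp only [mem_powersetCard] at hv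
    have hdisj : Disjoint v u := disjoint_of_subset_left hv.1 sdiff_disjoint
    simp only [mem_filter, mem_powersetCard]
    refine ⟨⟨subset_univ _, ?_⟩, subset_union_right⟩
    rw [card_union_of_disjoint hdisj, hv.2]
    omega
  · intro s hs
    simp only [mem_filter, mem_powersetCard] at hs
    exact sdiff_union_of_subset hs.2
  · intro v hv
    simp only [mem_powersetCard] at hv
    exact union_sdiff_cancel_right (disjoint_of_subset_left hv.1 sdiff_disjoint)

lemma sum_choose_inter {α : Type*} [Fintype α] [DecidableEq α] (n j : ℕ) (hj : j ≤ n)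
    (P : Finset α) :
    ∑ s ∈ powersetCard n (univ : Finset α), ((s ∩ P).card.choose j)
      = P.card.choose j * (Fintype.card α - j).choose (n - j) := by
  have step1 : ∀ s ∈ powersetCard n (univ : Finset α),
      ((s ∩ P).card.choose j) = ((powersetCard j P).filter (fun u => u ⊆ s)).card := by
    intro s _
    rw [← Finset.card_powersetCard j (s ∩ P)]
    congr 1
    ext u
    simp only [mem_powersetCard, mem_filter, subset_inter_iff]
    tauto
  rw [Finset.sum_congr rfl step1]
  simp only [Finset.card_filter]
  rw [Finset.sum_comm]
  have step2 : ∀ u ∈ powersetCard j P,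
      (∑ s ∈ powersetCard n (univ : Finset α), if u ⊆ s then 1 else 0)
        = (Fintype.card α - j).choose (n - j) := by
    intro u hu
    rw [mem_powersetCard] at hu
    rw [← Finset.card_filter, count_supersets n u (hu.2 ▸ hj), hu.2]
  rw [Finset.sum_congr rfl step2, Finset.sum_const, Finset.card_powersetCard, smul_eq_mul]

lemma mgf_bound {α : Type*} [Fintype α] [DecidableEq α] (n : ℕ) (hn : n ≤ Fintype.card α)
    (hN : 0 < Fintype.card α) (P : Finset α) (t : ℝ) (ht : 1 ≤ t) :
    ∑ s ∈ powersetCard n (univ : Finset α), t ^ (s ∩ P).card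
      ≤ ((Fintype.card α).choose n : ℝ)
        * (1 + (P.card / Fintype.card α) * (t - 1)) ^ n := by
  set N := Fintype.card α
  set K := P.card with hK
  have hKN : K ≤ N := by simpa [hK] using Finset.card_le_univ P
  have ht0 : (0:ℝ) ≤ t - 1 := by linarith
  -- expand t^k with binomial theorem, k := (s ∩ P).card ≤ n
  have expand : ∀ s ∈ powersetCard n (univ : Finset α),
      t ^ (s ∩ P).card
        = ∑ j ∈ Finset.range (n+1), ((s ∩ P).card.choose j : ℝ) * (t-1)^j := by
    intro s hs
    have hsc : (s ∩ P).card ≤ n := by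
      rw [mem_powersetCard] at hs
      calc (s ∩ P).card ≤ s.card := card_le_card inter_subset_left
        _ = n := hs.2
    have := add_pow (t-1) 1 (s ∩ P).card
    simp only [one_pow, mul_one, sub_add_cancel] at this
    rw [this]
    rw [Finset.sum_subset (Finset.range_subset_range.2 (Nat.succ_le_succ hsc))]
    · exact Finset.sum_congr rfl (fun j _ => by ring)
    · intro j _ hj
      rw [Finset.mem_range, not_lt] at hj
      rw [Nat.choose_eq_zero_of_lt (by omega)]
      simp
  rw [Finset.sum_congr rfl expand, Finset.sum_comm]
  have key : ∀ j ∈ Finset.range (n+1),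
      ∑ s ∈ powersetCard n (univ : Finset α), ((s ∩ P).card.choose j : ℝ) * (t-1)^j
        ≤ (N.choose n : ℝ) * (n.choose j) * (K / N)^j * (t-1)^j := by
    intro j hj
    rw [Finset.mem_range] at hj
    rw [← Finset.sum_mul, ← Nat.cast_sum, sum_choose_inter n j (by omega) P]
    apply mul_le_mul_of_nonneg_right _ (pow_nonneg ht0 j)
    -- (K.choose j * (N-j).choose (n-j) : ℝ) ≤ N.choose n * n.choose j * (K/N)^j
    have hid : N.choose n * n.choose j = N.choose j * (N - j).choose (n - j) :=
      Nat.choose_mul (by omega)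
    have h1 : (K.choose j : ℝ) * N^j ≤ (N.choose j : ℝ) * K^j := by
      exact_mod_cast choose_ratio N K j hKN
    have hNpos : (0:ℝ) < N := by exact_mod_cast hN
    have hNj : (0:ℝ) < (N:ℝ)^j := pow_pos hNpos j
    rw [div_pow, ← Nat.cast_pow, ← Nat.cast_pow]
    rw [Nat.cast_mul]
    calc (K.choose j : ℝ) * ((N - j).choose (n - j) : ℝ)
        ≤ ((N.choose j : ℝ) * (K:ℝ)^j / (N:ℝ)^j) * ((N - j).choose (n - j) : ℝ) := by
          apply mul_le_mul_of_nonneg_right _ (Nat.cast_nonneg _)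
          rw [le_div_iff₀ hNj]
          exact_mod_cast h1
      _ = ((N.choose j : ℝ) * ((N - j).choose (n - j) : ℝ)) * ((K:ℝ)^j / (N:ℝ)^j) := by ring
      _ = ((N.choose n : ℝ) * (n.choose j : ℝ)) * ((K:ℝ)^j / (N:ℝ)^j) := by
          congr 1
          exact_mod_cast congrArg (Nat.cast (R := ℝ)) hid.symm
      _ = (N.choose n : ℝ) * (n.choose j : ℝ) * (((K^j:ℕ):ℝ) / ((N^j:ℕ):ℝ)) := by push_cast; ring
  calc ∑ j ∈ Finset.range (n+1), ∑ s ∈ powersetCard n (univ : Finset α),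
          ((s ∩ P).card.choose j : ℝ) * (t-1)^j
      ≤ ∑ j ∈ Finset.range (n+1), (N.choose n : ℝ) * (n.choose j) * (K / N)^j * (t-1)^j :=
        Finset.sum_le_sum key
    _ = (N.choose n : ℝ) * ∑ j ∈ Finset.range (n+1), ((K/N)*(t-1))^j * 1^(n-j) * (n.choose j) := by
        rw [Finset.mul_sum]
        exact Finset.sum_congr rfl (fun j _ => by rw [mul_pow]; ring)
    _ = (N.choose n : ℝ) * (1 + (K / N) * (t - 1)) ^ n := by
        rw [← add_pow ((K/N)*(t-1)) 1 n, add_comm]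

lemma bernoulli_mgf_bound (p h : ℝ) (hp0 : 0 ≤ p) (hp1 : p ≤ 1) (hh : 0 ≤ h) :
    1 + p * (Real.exp h - 1) ≤ Real.exp (h * p + h ^ 2 / 8) := by
  set g : ℝ → ℝ := fun y => 1 + p * (Real.exp y - 1) with hg
  have hgpos : ∀ y, 0 < g y := by
    intro y
    have : g y = (1 - p) + p * Real.exp y := by simp [hg]; ring
    rw [this]
    rcases le_or_gt 1 (Real.exp y) with h1 | h1
    · nlinarith [exp_pos y]
    · nlinarith [exp_pos y]
  have hgderiv : ∀ y, HasDerivAt g (p * Real.exp y) y := by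
    intro y
    exact (((Real.hasDerivAt_exp y).sub_const 1).const_mul p).const_add 1
  set D : ℝ → ℝ := fun y => p + y / 4 - p * Real.exp y / g y with hD
  set f : ℝ → ℝ := fun y => y * p + y ^ 2 / 8 - Real.log (g y) with hf
  have hfderiv : ∀ y, HasDerivAt f (D y) y := by
    intro y
    have h1 : HasDerivAt (fun y : ℝ => y * p + y ^ 2 / 8) (p + y / 4) y := by
      have := ((hasDerivAt_id y).mul_const p).add
        (((hasDerivAt_pow 2 y)).div_const 8)
      simpa [Pi.add_def] using this.congr_deriv (by ring)
    have h2 : HasDerivAt (fun y => Real.log (g y)) (p * Real.exp y / g y) y :=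
      (hgderiv y).log (ne_of_gt (hgpos y))
    exact h1.sub h2
  have hDderiv : ∀ y, HasDerivAt D
      (1/4 - (p * Real.exp y * g y - (p * Real.exp y) * (p * Real.exp y)) / (g y)^2) y := by
    intro y
    have h2 : HasDerivAt (fun y => p * Real.exp y / g y)
        ((p * Real.exp y * g y - (p * Real.exp y) * (p * Real.exp y)) / (g y)^2) y := by
      have := ((Real.hasDerivAt_exp y).const_mul p).div (hgderiv y) (ne_of_gt (hgpos y))
      exact this.congr_deriv (by ring)
    have h1 : HasDerivAt (fun y : ℝ => p + y / 4) (1/4) y := by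
      simpa using ((hasDerivAt_id y).div_const 4).const_add p
    exact h1.sub h2
  have hDnonneg : ∀ y, 0 ≤ 1/4 - (p * Real.exp y * g y - (p * Real.exp y) * (p * Real.exp y)) / (g y)^2 := by
    intro y
    have hgp := hgpos y
    have key : ∀ G U : ℝ, 0 < G → U * G - U * U ≤ 1 / 4 * G ^ 2 := by
      intro G U _
      nlinarith [sq_nonneg (G - 2 * U)]
    rw [sub_nonneg, div_le_iff₀ (by positivity)]
    exact key (g y) (p * Real.exp y) hgp
  have hDmono : MonotoneOn D (Set.Ici 0) := by
    apply monotoneOn_of_deriv_nonneg (convex_Ici 0)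
    · exact (continuous_iff_continuousAt.2 fun y => (hDderiv y).differentiableAt.continuousAt).continuousOn
    · intro y _
      exact (hDderiv y).differentiableAt.differentiableWithinAt
    · intro y _
      rw [(hDderiv y).deriv]
      exact hDnonneg y
  have hD0 : D 0 = 0 := by simp [hD, hg]
  have hDpos : ∀ y ∈ Set.Ici (0:ℝ), 0 ≤ D y := by
    intro y hy
    rw [← hD0]
    exact hDmono (Set.self_mem_Ici) hy hy
  have hfmono : MonotoneOn f (Set.Ici 0) := by
    apply monotoneOn_of_deriv_nonneg (convex_Ici 0)
    · exact continuous_iff_continuousAt.2 (fun y => (hfderiv y).continuousAt) |>.continuousOn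
    · intro y _
      exact (hfderiv y).differentiableAt.differentiableWithinAt
    · intro y hy
      rw [(hfderiv y).deriv]
      exact hDpos y (le_of_lt (by simpa using hy))
  have hf0 : f 0 = 0 := by simp [hf, hg]
  have hfh : 0 ≤ f h := by
    rw [← hf0]
    exact hfmono Set.self_mem_Ici hh hh
  have hlog : Real.log (g h) ≤ h * p + h ^ 2 / 8 := by
    simp only [hf] at hfh
    linarith
  calc g h = Real.exp (Real.log (g h)) := (Real.exp_log (hgpos h)).symm
    _ ≤ Real.exp (h * p + h ^ 2 / 8) := Real.exp_le_exp.2 hlog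

open MeasureTheory
open scoped ENNReal

/-- Sampling without replacement from `±1` values: `x 1, …, x N ∈ {−1,+1}` with
population average `m = (1/N) ∑ j, x j`. A subset of size `n ≤ N` is drawn
uniformly at random among all `n`-element subsets of `{1,…,N}`, and `m_obs`
is the average of `x j` over the sampled indices. Then for every `ε > 0`,
`Pr(m_obs ≥ m + 2ε) ≤ exp(−2 n ε²)`.
(The sample space `Finset (Fin N)` is equipped with the discrete σ-algebra `⊤`.) -/
theorem sampling_hoeffding (N n : ℕ) (hN : 0 < N) (h0 : 0 < n) (hn : n ≤ N)
    (x : Fin N → ℝ) (hx : ∀ j, x j = 1 ∨ x j = -1)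
    (m : ℝ) (hm : m = (1 / N) * ∑ j, x j) (ε : ℝ) (hε : 0 < ε) :
    (@PMF.toMeasure _ ⊤
        (PMF.uniformOfFinset (Finset.powersetCard n (Finset.univ : Finset (Fin N)))
          (Finset.powersetCard_nonempty.mpr (by simpa using hn))))
        {s | m + 2 * ε ≤ (∑ j ∈ s, x j) / n} ≤
      ENNReal.ofReal (Real.exp (-2 * n * ε ^ 2)) := by
  set P : Finset (Fin N) := univ.filter (fun j => x j = 1) with hP
  set K : ℕ := P.card with hK
  set F : Finset (Finset (Fin N)) := powersetCard n (univ : Finset (Fin N)) with hF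
  have hNR : (0:ℝ) < N := by exact_mod_cast hN
  have hnR : (0:ℝ) < n := by exact_mod_cast h0
  have hKN : K ≤ N := by
    calc K ≤ (univ : Finset (Fin N)).card := card_le_univ P
      _ = N := by simp
  -- (a) sum over any s
  have suma : ∀ s : Finset (Fin N), ∑ j ∈ s, x j = 2 * ((s ∩ P).card : ℝ) - s.card := by
    intro s
    have hinter : s ∩ P = s.filter (fun j => x j = 1) := by
      ext j; simp [hP, and_comm]
    have hsplit := Finset.sum_filter_add_sum_filter_not s (fun j => x j = 1) x
    have h1 : ∑ j ∈ s.filter (fun j => x j = 1), x j = ((s ∩ P).card : ℝ) := by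
      rw [hinter, Finset.sum_congr rfl (fun j hj => (Finset.mem_filter.1 hj).2)]
      simp
    have h2 : ∑ j ∈ s.filter (fun j => ¬ x j = 1), x j
        = -(((s.filter (fun j => ¬ x j = 1)).card : ℝ)) := by
      have hval : ∀ j ∈ s.filter (fun j => ¬ x j = 1), x j = -1 := by
        intro j hj
        have hne := (Finset.mem_filter.1 hj).2
        rcases hx j with h | h
        · exact absurd h hne
        · exact h
      rw [Finset.sum_congr rfl hval, Finset.sum_const]
      simp
    have hcards : (s.filter (fun j => ¬ x j = 1)).card = s.card - (s ∩ P).card := by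
      rw [hinter, Finset.filter_not, Finset.card_sdiff_of_subset (Finset.filter_subset _ _)]
    have hle : (s ∩ P).card ≤ s.card := card_le_card inter_subset_left
    rw [← hsplit, h1, h2, hcards, Nat.cast_sub hle]
    ring
  -- (b) population mean
  set q : ℝ := (K:ℝ) / N with hq
  have hmK : m = 2 * q - 1 := by
    rw [hm]
    have : ∑ j, x j = 2 * ((univ ∩ P).card : ℝ) - (univ : Finset (Fin N)).card := suma univ
    rw [this]
    have h1 : univ ∩ P = P := by simp
    rw [h1]
    simp only [card_univ, Fintype.card_fin]
    rw [hq]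
    field_simp
    ring
  -- (c) event condition
  have hcond : ∀ s ∈ F, (m + 2 * ε ≤ (∑ j ∈ s, x j) / n
      ↔ (n:ℝ) * q + n * ε ≤ ((s ∩ P).card : ℝ)) := by
    intro s hs
    rw [hF, mem_powersetCard] at hs
    rw [suma s, hs.2, hmK, le_div_iff₀ hnR]
    constructor <;> intro h <;> nlinarith [h]
  -- Chernoff
  set t : ℝ := Real.exp (4 * ε) with hT
  have ht1 : 1 ≤ t := by
    rw [hT]
    calc (1:ℝ) = Real.exp 0 := (Real.exp_zero).symm
      _ ≤ _ := Real.exp_le_exp.2 (by positivity)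
  set c : ℝ := (n:ℝ) * q + n * ε with hc
  have keyR : ∀ (A : Finset (Finset (Fin N))), (∀ s ∈ A, s ∈ F ∧ m + 2 * ε ≤ (∑ j ∈ s, x j) / n) →
      (A.card : ℝ) ≤ (N.choose n : ℝ) * Real.exp (-2 * n * ε ^ 2) := by
    intro A hA
    have step1 : (A.card : ℝ) ≤ ∑ s ∈ A, Real.exp (-(4*ε) * c) * t ^ (s ∩ P).card := by
      rw [Finset.card_eq_sum_ones A]
      push_cast
      apply Finset.sum_le_sum
      intro s hs
      obtain ⟨hsF, hsev⟩ := hA s hs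
      have hk : c ≤ ((s ∩ P).card : ℝ) := by
        rw [hc]; exact (hcond s hsF).1 hsev
      have : Real.exp (-(4*ε) * c) * t ^ (s ∩ P).card
          = Real.exp (4 * ε * (((s ∩ P).card : ℝ) - c)) := by
        rw [hT, ← Real.exp_nat_mul, ← Real.exp_add]
        ring_nf
      rw [this]
      calc (1:ℝ) = Real.exp 0 := (Real.exp_zero).symm
        _ ≤ _ := Real.exp_le_exp.2 (by nlinarith)
    have step2 : ∑ s ∈ A, Real.exp (-(4*ε) * c) * t ^ (s ∩ P).card
        ≤ Real.exp (-(4*ε) * c) * ∑ s ∈ F, t ^ (s ∩ P).card := by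
      rw [← Finset.mul_sum]
      apply mul_le_mul_of_nonneg_left _ (le_of_lt (Real.exp_pos _))
      apply Finset.sum_le_sum_of_subset_of_nonneg (fun s hs => (hA s hs).1)
      intro s _ _
      positivity
    have step3 : ∑ s ∈ F, t ^ (s ∩ P).card
        ≤ (N.choose n : ℝ) * (1 + ((K:ℝ) / N) * (t - 1)) ^ n := by
      have := mgf_bound (α := Fin N) n (by simpa using hn) (by simpa using hN) P t ht1
      simpa [hF, ← hK, ← hq] using this
    have hp0 : (0:ℝ) ≤ q := by rw [hq]; positivity
    have hp1 : q ≤ 1 := by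
      rw [hq, div_le_one hNR]; exact_mod_cast hKN
    have step4 : (1 + q * (t - 1)) ^ n
        ≤ Real.exp ((4*ε) * q + (4*ε)^2/8) ^ n := by
      apply pow_le_pow_left₀ _ _ n
      · nlinarith [ht1, hp0]
      · rw [hT]
        exact bernoulli_mgf_bound q (4*ε) hp0 hp1 (by positivity)
    have final : Real.exp (-(4*ε) * c) * ((N.choose n : ℝ)
          * Real.exp ((4*ε) * q + (4*ε)^2/8) ^ n)
        = (N.choose n : ℝ) * Real.exp (-2 * n * ε ^ 2) := by
      rw [← Real.exp_nat_mul, mul_left_comm, ← Real.exp_add, hc]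
      congr 2
      ring
    calc (A.card : ℝ) ≤ ∑ s ∈ A, Real.exp (-(4*ε) * c) * t ^ (s ∩ P).card := step1
      _ ≤ Real.exp (-(4*ε) * c) * ∑ s ∈ F, t ^ (s ∩ P).card := step2
      _ ≤ Real.exp (-(4*ε) * c) * ((N.choose n : ℝ) * (1 + q * (t - 1)) ^ n) := by
          apply mul_le_mul_of_nonneg_left step3 (le_of_lt (Real.exp_pos _))
      _ ≤ Real.exp (-(4*ε) * c) * ((N.choose n : ℝ)
            * Real.exp ((4*ε) * q + (4*ε)^2/8) ^ n) := by
          apply mul_le_mul_of_nonneg_left _ (le_of_lt (Real.exp_pos _))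
          exact mul_le_mul_of_nonneg_left step4 (Nat.cast_nonneg _)
      _ = (N.choose n : ℝ) * Real.exp (-2 * n * ε ^ 2) := final
  -- measure frontend
  rw [@PMF.toMeasure_uniformOfFinset_apply _ _ _ _ ⊤ MeasurableSpace.measurableSet_top]
  have hFcard : F.card = N.choose n := by
    rw [hF, Finset.card_powersetCard]
    simp
  set A := F.filter (· ∈ {s : Finset (Fin N) | m + 2 * ε ≤ (∑ j ∈ s, x j) / n}) with hA
  have hAR : (A.card : ℝ) ≤ (N.choose n : ℝ) * Real.exp (-2 * n * ε ^ 2) := by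
    apply keyR
    intro s hs
    rw [hA, Finset.mem_filter] at hs
    exact ⟨hs.1, hs.2⟩
  have hCpos : (0:ℝ) < (N.choose n : ℝ) := by exact_mod_cast Nat.choose_pos hn
  rw [hFcard]
  have hdiv : ((A.card : ℕ) : ℝ≥0∞) / ((N.choose n : ℕ) : ℝ≥0∞)
      = ENNReal.ofReal ((A.card : ℝ) / ((N.choose n : ℕ) : ℝ)) := by
    rw [ENNReal.ofReal_div_of_pos hCpos, ENNReal.ofReal_natCast, ENNReal.ofReal_natCast]
  rw [hdiv]
  apply ENNReal.ofReal_le_ofReal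
  rw [div_le_iff₀ hCpos]
  linarith [hAR]
end

section
/- (Tsirelson's inequality, vector form.) Let a, a', b, b' be unit vectors in a real inner product space. Then ⟨a,b⟩ + ⟨a,b'⟩ + ⟨a',b⟩ − ⟨a',b'⟩ ≤ 2√2. -/
/-- Tsirelson's inequality, vector form: for unit vectors `a, a', b, b'` in a
real inner product space, `⟨a,b⟩ + ⟨a,b'⟩ + ⟨a',b⟩ − ⟨a',b'⟩ ≤ 2√2`. -/
theorem tsirelson_vector {E : Type*} [NormedAddCommGroup E]
    [InnerProductSpace ℝ E] (a a' b b' : E)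
    (ha : ‖a‖ = 1) (ha' : ‖a'‖ = 1) (hb : ‖b‖ = 1) (hb' : ‖b'‖ = 1) :
    (inner ℝ a b : ℝ) + (inner ℝ a b' : ℝ) + (inner ℝ a' b : ℝ) - (inner ℝ a' b' : ℝ)
      ≤ 2 * Real.sqrt 2 := by
  have h1 : (inner ℝ a (b + b') : ℝ) ≤ ‖b + b'‖ := by
    calc (inner ℝ a (b + b') : ℝ) ≤ ‖a‖ * ‖b + b'‖ := real_inner_le_norm _ _
    _ = ‖b + b'‖ := by rw [ha, one_mul]
  have h2 : (inner ℝ a' (b - b') : ℝ) ≤ ‖b - b'‖ := by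
    calc (inner ℝ a' (b - b') : ℝ) ≤ ‖a'‖ * ‖b - b'‖ := real_inner_le_norm _ _
    _ = ‖b - b'‖ := by rw [ha', one_mul]
  have hpar : ‖b + b'‖ ^ 2 + ‖b - b'‖ ^ 2 = 4 := by
    have := norm_add_sq_real b b'
    have := norm_sub_sq_real b b'
    nlinarith [this]
  have hs : Real.sqrt 2 ^ 2 = 2 := Real.sq_sqrt (by norm_num)
  have hsum : ‖b + b'‖ + ‖b - b'‖ ≤ 2 * Real.sqrt 2 := by
    nlinarith [norm_nonneg (b + b'), norm_nonneg (b - b'),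
      Real.sqrt_nonneg 2, sq_nonneg (‖b + b'‖ - ‖b - b'‖),
      sq_nonneg (‖b + b'‖ + ‖b - b'‖ - 2 * Real.sqrt 2)]
  have e1 : (inner ℝ a (b + b') : ℝ) = inner ℝ a b + inner ℝ a b' := inner_add_right _ _ _
  have e2 : (inner ℝ a' (b - b') : ℝ) = inner ℝ a' b - inner ℝ a' b' := inner_sub_right _ _ _
  linarith
end

section
/- For real γ with 0 < γ ≤ 1, the coincidence-loophole local realist bound 2 + 6(γ⁻¹ − 1) is less than or equal to the Tsirelson value 2√2 if and only if γ ≥ 3(1 − 1/√2); in particular, at γ = 3(1 − 1/√2) one has 2 + 6(γ⁻¹ − 1) = 2√2. -/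
/-- For efficiency `γ ∈ (0,1]`, the coincidence-loophole local realist bound
`2 + 6(γ⁻¹ − 1)` of Larsson and Gill is at most the Tsirelson value `2√2` if and
only if `γ ≥ 3(1 − 1/√2)`; in particular, at `γ = 3(1 − 1/√2)` the bound equals
`2√2`. -/
theorem coincidence_loophole_threshold (γ : ℝ) (h0 : 0 < γ) (h1 : γ ≤ 1) :
    (2 + 6 * (γ⁻¹ - 1) ≤ 2 * Real.sqrt 2 ↔ 3 * (1 - 1 / Real.sqrt 2) ≤ γ) ∧
    2 + 6 * ((3 * (1 - 1 / Real.sqrt 2))⁻¹ - 1) = 2 * Real.sqrt 2 := by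
  have hs : Real.sqrt 2 ^ 2 = 2 := Real.sq_sqrt (by norm_num)
  have hs1 : (1:ℝ) < Real.sqrt 2 := by nlinarith [Real.sqrt_nonneg 2]
  have hspos : (0:ℝ) < Real.sqrt 2 := by linarith
  have hginv : γ * γ⁻¹ = 1 := mul_inv_cancel₀ h0.ne'
  have hsinv : (1 / Real.sqrt 2) * Real.sqrt 2 = 1 := by
    field_simp
  have hγ0 : (0:ℝ) < 3 * (1 - 1 / Real.sqrt 2) := by nlinarith
  have hkey : (3 * (1 - 1 / Real.sqrt 2))⁻¹ = (2 * Real.sqrt 2 + 4) / 6 := by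
    apply inv_eq_of_mul_eq_one_right
    field_simp
    nlinarith
  refine ⟨⟨fun h => ?_, fun h => ?_⟩, ?_⟩
  · have h6 : 6 * γ⁻¹ ≤ 2 * Real.sqrt 2 + 4 := by linarith
    have : 6 ≤ γ * (2 * Real.sqrt 2 + 4) := by nlinarith
    nlinarith
  · have hinv : γ⁻¹ ≤ (3 * (1 - 1 / Real.sqrt 2))⁻¹ := inv_anti₀ hγ0 h
    rw [hkey] at hinv
    linarith
  · rw [hkey]; ring
end
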